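/- For every j ∈ ℕ, setting U_j := Σ_{l₁≥0, l₂≥j} β(l₁+l₂+1)·β(l₂)·X^{l₁}·Y^{l₂} and B_j(Y) := Σ_{l≥0} β(j+l)²·Yˡ in the ring of formal power series in two variables X, Y over ℝ, one has (1 − λq⁻¹·X + q⁻¹·X²)·(1 + q⁻¹·Y)·U_j = Y^j · ((q⁻¹λ − q⁻¹·X − q⁻²·XY)·B_j(Y) + β(j)·β(j+1) − q⁻¹λ·β(j)²). -/

import Mathlib

/-- The formal power series in two variables `X = X 0`, `Y = X 1` over `ℝ` with coefficient
`f a b` on `Xᵃ·Yᵇ`. -/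
def mk2 (f : ℕ → ℕ → ℝ) : MvPowerSeries (Fin 2) ℝ := fun m => f (m 0) (m 1)

open MvPowerSeries

lemma mk2_add (f g : ℕ → ℕ → ℝ) : mk2 f + mk2 g = mk2 (fun a b => f a b + g a b) := rfl
lemma mk2_sub (f g : ℕ → ℕ → ℝ) : mk2 f - mk2 g = mk2 (fun a b => f a b - g a b) := rfl

lemma C_mul_mk2 (c : ℝ) (f : ℕ → ℕ → ℝ) :
    C (σ := Fin 2) (R := ℝ) c * mk2 f = mk2 (fun a b => c * f a b) := by
  apply MvPowerSeries.ext; intro m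
  rw [coeff_C_mul]; rfl

lemma C_eq_mk2 (c : ℝ) :
    C (σ := Fin 2) (R := ℝ) c = mk2 (fun a b => if a = 0 ∧ b = 0 then c else 0) := by
  apply MvPowerSeries.ext; intro m
  classical
  rw [coeff_C, coeff_apply]
  simp only [mk2]
  by_cases h : m = 0
  · subst h; simp
  · rw [if_neg h, if_neg]
    rintro ⟨h0, h1⟩
    apply h
    ext i
    fin_cases i <;> simpa

lemma X0_pow_mul_mk2 (n : ℕ) (f : ℕ → ℕ → ℝ) :
    (X 0 : MvPowerSeries (Fin 2) ℝ) ^ n * mk2 f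
      = mk2 (fun a b => if n ≤ a then f (a - n) b else 0) := by
  apply MvPowerSeries.ext; intro m
  rw [X_pow_eq, coeff_monomial_mul, coeff_apply, coeff_apply]
  simp only [mk2, Finsupp.single_le_iff, Finsupp.tsub_apply, Finsupp.single_eq_same,
    Finsupp.single_eq_of_ne (show (1 : Fin 2) ≠ 0 by decide), tsub_zero, one_mul]

lemma X1_pow_mul_mk2 (n : ℕ) (f : ℕ → ℕ → ℝ) :
    (X 1 : MvPowerSeries (Fin 2) ℝ) ^ n * mk2 f
      = mk2 (fun a b => if n ≤ b then f a (b - n) else 0) := by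
  apply MvPowerSeries.ext; intro m
  rw [X_pow_eq, coeff_monomial_mul, coeff_apply, coeff_apply]
  simp only [mk2, Finsupp.single_le_iff, Finsupp.tsub_apply, Finsupp.single_eq_same,
    Finsupp.single_eq_of_ne (show (0 : Fin 2) ≠ 1 by decide), tsub_zero, one_mul]

/-- with `U_j = Σ_{l₁≥0, l₂≥j} β(l₁+l₂+1)β(l₂)X^{l₁}Y^{l₂}` and
`B_j(Y) = Σ_{l≥0} β(j+l)²Yˡ`,
`(1 − λq⁻¹X + q⁻¹X²)(1 + q⁻¹Y)·U_j
  = Y^j·((q⁻¹λ − q⁻¹X − q⁻²XY)·B_j(Y) + β(j)β(j+1) − q⁻¹λβ(j)²)`. -/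
theorem stmt10 (q lam : ℝ) (hq : q ≠ 0) (β : ℕ → ℝ)
    (hrec : ∀ k : ℕ, q * β (k + 2) - lam * β (k + 1) + β k = 0) (j : ℕ) :
    (1 - MvPowerSeries.C (σ := Fin 2) (R := ℝ) (lam * q⁻¹) * MvPowerSeries.X 0 +
        MvPowerSeries.C (σ := Fin 2) (R := ℝ) q⁻¹ * MvPowerSeries.X 0 ^ 2) *
      (1 + MvPowerSeries.C (σ := Fin 2) (R := ℝ) q⁻¹ * MvPowerSeries.X 1) *
      mk2 (fun l₁ l₂ => if j ≤ l₂ then β (l₁ + l₂ + 1) * β l₂ else 0) =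
    MvPowerSeries.X 1 ^ j *
      ((MvPowerSeries.C (σ := Fin 2) (R := ℝ) (q⁻¹ * lam) -
          MvPowerSeries.C (σ := Fin 2) (R := ℝ) q⁻¹ * MvPowerSeries.X 0 -
          MvPowerSeries.C (σ := Fin 2) (R := ℝ) (q⁻¹ ^ 2) * MvPowerSeries.X 0 * MvPowerSeries.X 1) *
        mk2 (fun a b => if a = 0 then β (j + b) ^ 2 else 0) +
        MvPowerSeries.C (σ := Fin 2) (R := ℝ) (β j * β (j + 1) - q⁻¹ * lam * β j ^ 2)) := by
  set u : ℕ → ℕ → ℝ := fun l₁ l₂ => if j ≤ l₂ then β (l₁ + l₂ + 1) * β l₂ else 0 with hu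
  set g : ℕ → ℕ → ℝ := fun a b => if a = 0 then β (j + b) ^ 2 else 0 with hg
  set K : ℝ := β j * β (j + 1) - q⁻¹ * lam * β j ^ 2 with hK
  -- LHS
  have e1 : (1 + C (σ := Fin 2) (R := ℝ) q⁻¹ * X 1) * mk2 u
      = mk2 (fun a b => u a b + q⁻¹ * (if 1 ≤ b then u a (b - 1) else 0)) := by
    have h : (1 + C (σ := Fin 2) (R := ℝ) q⁻¹ * X 1) * mk2 u
        = mk2 u + C (σ := Fin 2) (R := ℝ) q⁻¹ * ((X 1) ^ 1 * mk2 u) := by ring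
    rw [h, X1_pow_mul_mk2, C_mul_mk2, mk2_add]
  set u1 : ℕ → ℕ → ℝ := fun a b => u a b + q⁻¹ * (if 1 ≤ b then u a (b - 1) else 0) with hu1
  have e2 : (1 - C (σ := Fin 2) (R := ℝ) (lam * q⁻¹) * X 0 + C (σ := Fin 2) (R := ℝ) q⁻¹ * X 0 ^ 2) * mk2 u1
      = mk2 (fun a b => u1 a b - lam * q⁻¹ * (if 1 ≤ a then u1 (a - 1) b else 0)
          + q⁻¹ * (if 2 ≤ a then u1 (a - 2) b else 0)) := by
    have h : (1 - C (σ := Fin 2) (R := ℝ) (lam * q⁻¹) * X 0 + C (σ := Fin 2) (R := ℝ) q⁻¹ * X 0 ^ 2) * mk2 u1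
        = mk2 u1 - C (σ := Fin 2) (R := ℝ) (lam * q⁻¹) * ((X 0) ^ 1 * mk2 u1)
          + C (σ := Fin 2) (R := ℝ) q⁻¹ * ((X 0) ^ 2 * mk2 u1) := by ring
    rw [h, X0_pow_mul_mk2, X0_pow_mul_mk2, C_mul_mk2, C_mul_mk2, mk2_sub, mk2_add]
  -- RHS inner factor
  have e3 : (C (σ := Fin 2) (R := ℝ) (q⁻¹ * lam) - C (σ := Fin 2) (R := ℝ) q⁻¹ * X 0
        - C (σ := Fin 2) (R := ℝ) (q⁻¹ ^ 2) * X 0 * X 1) * mk2 g + C (σ := Fin 2) (R := ℝ) K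
      = mk2 (fun a b => q⁻¹ * lam * g a b - q⁻¹ * (if 1 ≤ a then g (a - 1) b else 0)
          - q⁻¹ ^ 2 * (if 1 ≤ a then (if 1 ≤ b then g (a - 1) (b - 1) else 0) else 0)
          + (if a = 0 ∧ b = 0 then K else 0)) := by
    have h : (C (σ := Fin 2) (R := ℝ) (q⁻¹ * lam) - C (σ := Fin 2) (R := ℝ) q⁻¹ * X 0
          - C (σ := Fin 2) (R := ℝ) (q⁻¹ ^ 2) * X 0 * X 1) * mk2 g + C (σ := Fin 2) (R := ℝ) K
        = C (σ := Fin 2) (R := ℝ) (q⁻¹ * lam) * mk2 g - C (σ := Fin 2) (R := ℝ) q⁻¹ * ((X 0) ^ 1 * mk2 g)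
          - C (σ := Fin 2) (R := ℝ) (q⁻¹ ^ 2) * ((X 0) ^ 1 * ((X 1) ^ 1 * mk2 g))
          + C (σ := Fin 2) (R := ℝ) K := by ring
    rw [h, X1_pow_mul_mk2, X0_pow_mul_mk2, X0_pow_mul_mk2, C_mul_mk2, C_mul_mk2, C_mul_mk2,
      C_eq_mk2, mk2_sub, mk2_sub, mk2_add]
  rw [mul_assoc, e1, e2, e3, X1_pow_mul_mk2]
  refine congrArg mk2 ?_
  funext a b
  simp only [hu1, hu, hg, hK]
  rcases lt_or_ge b j with hb | hb
  · have h1 : ¬ j ≤ b := by omega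
    have h2 : ¬ j ≤ b - 1 := by omega
    simp only [if_neg h1, if_neg h2, ite_self, mul_zero, sub_zero, add_zero, zero_add,
      zero_sub, neg_zero]
  · have hX : q * q⁻¹ = 1 := mul_inv_cancel₀ hq
    obtain ⟨t, rfl⟩ : ∃ t, b = j + t := ⟨b - j, by omega⟩
    rcases t with _ | s
    · -- b = j
      have hz : ∀ x : ℝ, (if 1 ≤ j then (if j ≤ j - 1 then x else (0:ℝ)) else 0) = 0 := by
        intro x; split_ifs with h1 h2
        · omega
        · rfl
        · rfl
      simp only [Nat.add_zero, if_pos (le_refl j), hz, Nat.sub_self, mul_zero, add_zero]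
      rcases a with _ | a
      · simp only [if_pos (show (0:ℕ) = 0 ∧ (0:ℕ) = 0 from ⟨rfl, rfl⟩),
          if_neg (show ¬ (1:ℕ) ≤ 0 by omega), if_neg (show ¬ (2:ℕ) ≤ 0 by omega),
          if_true, if_false, and_self, true_and, and_true, eq_self_iff_true,
          mul_zero, add_zero, sub_zero]
        ring
      rcases a with _ | n
      · simp only [if_pos (show (1:ℕ) ≤ 1 by omega), if_neg (show ¬ (2:ℕ) ≤ 1 by omega),
          if_neg (show ¬ (1:ℕ) = 0 by omega), if_neg (show ¬ ((1:ℕ) = 0 ∧ (0:ℕ) = 0) by omega),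
          if_neg (show ¬ (1:ℕ) ≤ 0 by omega), if_pos (show (0:ℕ) = 0 from rfl),
          if_true, if_false, and_self, true_and, and_true, false_and, and_false,
          eq_self_iff_true, Nat.sub_self, mul_zero, add_zero]
        simp only [show 0+1+j+1 = j+2 by omega, show 0+j+1 = j+1 by omega]
        linear_combination q⁻¹ * β j * hrec j - β (j + 2) * β j * hX
      · simp only [if_pos (show (1:ℕ) ≤ n + 2 by omega), if_pos (show (2:ℕ) ≤ n + 2 by omega),
          if_neg (show ¬ (n + 2 : ℕ) = 0 by omega),
          if_neg (show ¬ ((n + 2 : ℕ) = 0 ∧ (0:ℕ) = 0) by omega),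
          if_neg (show ¬ (n + 2 - 1 : ℕ) = 0 by omega),
          if_neg (show ¬ (1:ℕ) ≤ 0 by omega),
          if_true, if_false, and_self, true_and, and_true, false_and, and_false,
          eq_self_iff_true, mul_zero, add_zero]
        simp only [show n+1+1+j+1 = n+j+3 by omega, show n+1+1-1+j+1 = n+j+2 by omega,
          show n+1+1-2+j+1 = n+j+1 by omega]
        linear_combination q⁻¹ * β j * hrec (n + j + 1) - β (n + j + 1 + 2) * β j * hX
    · -- b = j + (s+1)
      rw [show j + (s + 1) - 1 = j + s by omega, show j + (s + 1) - j = s + 1 by omega]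
      simp only [if_pos (show j ≤ j + (s + 1) by omega), if_pos (show j ≤ j + s by omega),
        if_pos (show 1 ≤ j + (s + 1) by omega), if_pos (show (1:ℕ) ≤ s + 1 by omega),
        if_neg (show ¬ (s + 1 : ℕ) = 0 by omega),
        if_true, if_false, and_self, true_and, and_true, false_and, and_false,
        eq_self_iff_true, Nat.add_sub_cancel]
      rcases a with _ | a
      · simp only [if_neg (show ¬ (1:ℕ) ≤ 0 by omega), if_neg (show ¬ (2:ℕ) ≤ 0 by omega),
          if_pos (show (0:ℕ) = 0 from rfl),
          if_neg (show ¬ ((0:ℕ) = 0 ∧ (s + 1 : ℕ) = 0) by omega),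
          if_true, if_false, and_self, true_and, and_true, false_and, and_false,
          eq_self_iff_true, mul_zero, add_zero, sub_zero]
        simp only [show j+(s+1) = j+s+1 by omega, show 0+(j+s+1)+1 = j+s+2 by omega,
          show 0+(j+s)+1 = j+s+1 by omega, if_neg (show ¬ (s+1:ℕ) = 0 by omega), if_false]
        linear_combination q⁻¹ * β (j + s + 1) * hrec (j + s)
          - β (j + s + 2) * β (j + s + 1) * hX
      rcases a with _ | n
      · simp only [if_pos (show (1:ℕ) ≤ 1 by omega), if_neg (show ¬ (2:ℕ) ≤ 1 by omega),
          if_neg (show ¬ (1:ℕ) = 0 by omega),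
          if_neg (show ¬ ((1:ℕ) = 0 ∧ (s + 1 : ℕ) = 0) by omega),
          if_pos (show (0:ℕ) = 0 from rfl),
          if_true, if_false, and_self, true_and, and_true, false_and, and_false,
          eq_self_iff_true, Nat.sub_self, mul_zero, add_zero]
        simp only [show j+(s+1) = j+s+1 by omega, show 0+1+(j+s+1)+1 = j+s+3 by omega,
          show 0+1-1+(j+s+1)+1 = j+s+2 by omega, show 0+(j+s+1)+1 = j+s+2 by omega,
          show 0+1-1+(j+s)+1 = j+s+1 by omega, show 0+(j+s)+1 = j+s+1 by omega,
          show 0+1+(j+s)+1 = j+s+2 by omega]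
        linear_combination q⁻¹ * β (j + s + 1) * hrec (j + s + 1)
          + q⁻¹ ^ 2 * β (j + s) * hrec (j + s)
          - (β (j + s + 3) * β (j + s + 1) + q⁻¹ * β (j + s + 2) * β (j + s)) * hX
      · simp only [if_pos (show (1:ℕ) ≤ n + 2 by omega), if_pos (show (2:ℕ) ≤ n + 2 by omega),
          if_neg (show ¬ (n + 2 : ℕ) = 0 by omega),
          if_neg (show ¬ ((n + 2 : ℕ) = 0 ∧ (s + 1 : ℕ) = 0) by omega),
          if_neg (show ¬ (n + 2 - 1 : ℕ) = 0 by omega),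
          if_true, if_false, and_self, true_and, and_true, false_and, and_false,
          eq_self_iff_true, mul_zero, add_zero]
        simp only [show j+(s+1) = j+s+1 by omega, show n+1+1+(j+s+1)+1 = n+j+s+4 by omega,
          show n+1+1-1+(j+s+1)+1 = n+j+s+3 by omega, show n+1+1-2+(j+s+1)+1 = n+j+s+2 by omega,
          show n+1+1+(j+s)+1 = n+j+s+3 by omega, show n+1+1-1+(j+s)+1 = n+j+s+2 by omega,
          show n+1+1-2+(j+s)+1 = n+j+s+1 by omega]
        linear_combination q⁻¹ * β (j + s + 1) * hrec (n + j + s + 2)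
          + q⁻¹ ^ 2 * β (j + s) * hrec (n + j + s + 1)
          - (β (n + j + s + 4) * β (j + s + 1) + q⁻¹ * β (n + j + s + 3) * β (j + s)) * hX
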